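/- Let ℓ be a positive integer, let T_ℓ be the lattice triangle with vertices (0,0), (ℓ,0) and (0,ℓ), and let S_ℓ be the lattice square with vertices (0,0), (ℓ,0), (ℓ,ℓ) and (0,ℓ). Then for every integer k with ℓ ≤ k ≤ ℓ², there exists a 2-dimensional convex lattice polytope P satisfying T_ℓ ⊂ P ⊆ S_ℓ and v(P) = (ℓ² + k)/2. -/

import Mathlib

open MeasureTheory

noncomputable section

/-- The canonical embedding of integer vectors into real vectors. -/
def intVec {d : ℕ} (x : Fin d → ℤ) : Fin d → ℝ := fun i => (x i : ℝ)

/-- `P` is a convex lattice polytope: the convex hull of a finite set of lattice points. -/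
def IsConvexLatticePolytope (d : ℕ) (P : Set (Fin d → ℝ)) : Prop :=
  ∃ V : Finset (Fin d → ℤ), P = convexHull ℝ (intVec '' (V : Set (Fin d → ℤ)))

/-- `P` is `d`-dimensional: its affine span is all of `ℝ^d`. -/
def IsFullDim (d : ℕ) (P : Set (Fin d → ℝ)) : Prop :=
  affineSpan ℝ P = ⊤

/-- The set of lattice points of `P`. -/
def latticePts (d : ℕ) (P : Set (Fin d → ℝ)) : Set (Fin d → ℤ) :=
  {x | intVec x ∈ P}

/-- The lattice `ℤ^d` viewed inside `ℝ^d`. -/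
def latticeSet (d : ℕ) : Set (Fin d → ℝ) := Set.range (intVec (d := d))

/-- Two subsets of `ℝ^d` are lattice-equivalent if some affine bijection of `ℝ^d`
preserving `ℤ^d` maps one onto the other. -/
def LatticeEquiv (d : ℕ) (P₁ P₂ : Set (Fin d → ℝ)) : Prop :=
  ∃ σ : (Fin d → ℝ) ≃ᵃ[ℝ] (Fin d → ℝ), σ '' latticeSet d = latticeSet d ∧ P₂ = σ '' P₁

/-- The type of equivalence classes of `d`-dimensional convex lattice polytopes
satisfying the predicate `Q`, modulo lattice equivalence. -/
def ClassesType (d : ℕ) (Q : Set (Fin d → ℝ) → Prop) : Type :=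
  Quot (fun P₁ P₂ : {P : Set (Fin d → ℝ) // IsConvexLatticePolytope d P ∧ IsFullDim d P ∧ Q P} =>
    LatticeEquiv d P₁.1 P₂.1)

/-- `P` is centrally symmetric (with some center `c`, i.e. `P = 2c - P`). -/
def IsCentrallySymmetric (d : ℕ) (P : Set (Fin d → ℝ)) : Prop :=
  ∃ c : Fin d → ℝ, ∀ x, x ∈ P ↔ (2 : ℝ) • c - x ∈ P

open Set

namespace Helpers

abbrev E2 := Fin 2 → ℝ

lemma intVec_pair (m n : ℤ) : intVec ![m, n] = ![(m : ℝ), (n : ℝ)] := by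
  funext i
  fin_cases i <;> simp [intVec]

lemma combo_pt (u1 v1 u2 v2 t : ℝ) :
    (1 - t) • (![u1, v1] : E2) + t • ![u2, v2]
      = ![(1 - t) * u1 + t * u2, (1 - t) * v1 + t * v2] := by
  funext i
  fin_cases i <;> simp

lemma hull_seg {s : Set E2} {u1 v1 u2 v2 : ℝ}
    (h1 : ![u1, v1] ∈ convexHull ℝ s) (h2 : ![u2, v2] ∈ convexHull ℝ s)
    (t x y : ℝ) (h0 : 0 ≤ t) (ht : t ≤ 1)
    (hx : x = (1 - t) * u1 + t * u2) (hy : y = (1 - t) * v1 + t * v2) :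
    ![x, y] ∈ convexHull ℝ s := by
  have := (convex_convexHull ℝ s) h1 h2 (by linarith : (0:ℝ) ≤ 1 - t) h0 (by ring)
  rwa [combo_pt, ← hx, ← hy] at this

/-- any point of the square `[0,L]²` is in the hull of the four corners -/
lemma mem_sq {L : ℝ} (hL : 0 < L) {u v : ℝ} (hu0 : 0 ≤ u) (huL : u ≤ L)
    (hv0 : 0 ≤ v) (hvL : v ≤ L) :
    ![u, v] ∈ convexHull ℝ ({![0,0], ![L,0], ![L,L], ![0,L]} : Set E2) := by
  have m1 : (![0,0] : E2) ∈ convexHull ℝ ({![0,0], ![L,0], ![L,L], ![0,L]} : Set E2) :=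
    subset_convexHull ℝ _ (by simp)
  have m2 : (![L,0] : E2) ∈ convexHull ℝ ({![0,0], ![L,0], ![L,L], ![0,L]} : Set E2) :=
    subset_convexHull ℝ _ (by simp)
  have m3 : (![L,L] : E2) ∈ convexHull ℝ ({![0,0], ![L,0], ![L,L], ![0,L]} : Set E2) :=
    subset_convexHull ℝ _ (by simp)
  have m4 : (![0,L] : E2) ∈ convexHull ℝ ({![0,0], ![L,0], ![L,L], ![0,L]} : Set E2) :=
    subset_convexHull ℝ _ (by simp)
  have hbot : (![u, 0] : E2) ∈ convexHull ℝ ({![0,0], ![L,0], ![L,L], ![0,L]} : Set E2) := by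
    refine hull_seg m1 m2 (u / L) u 0 (div_nonneg hu0 hL.le) ((div_le_one hL).2 huL) ?_ (by ring)
    rw [mul_zero, zero_add, div_mul_cancel₀ u hL.ne']
  have htop : (![u, L] : E2) ∈ convexHull ℝ ({![0,0], ![L,0], ![L,L], ![0,L]} : Set E2) := by
    refine hull_seg m4 m3 (u / L) u L (div_nonneg hu0 hL.le) ((div_le_one hL).2 huL) ?_ (by ring)
    rw [mul_zero, zero_add, div_mul_cancel₀ u hL.ne']
  refine hull_seg hbot htop (v / L) u v (div_nonneg hv0 hL.le) ((div_le_one hL).2 hvL)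
    (by ring) ?_
  rw [mul_zero, zero_add, div_mul_cancel₀ v hL.ne']

/-- the triangle is contained in the halfplane `x + y ≤ L` -/
lemma triangle_halfplane {L : ℝ} (hL : 0 ≤ L) :
    convexHull ℝ ({![0,0], ![L,0], ![0,L]} : Set E2) ⊆ {p : E2 | p 0 + p 1 ≤ L} := by
  apply convexHull_min
  · rintro p (rfl|rfl|rfl) <;>
      simp only [mem_setOf_eq, Matrix.cons_val_zero, Matrix.cons_val_one, Matrix.head_cons] <;>
      linarith
  · intro p hp q hq a b ha hb hab
    simp only [mem_setOf_eq] at *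
    have h0 : (a • p + b • q) 0 = a * p 0 + b * q 0 := by simp
    have h1 : (a • p + b • q) 1 = a * p 1 + b * q 1 := by simp
    rw [h0, h1]
    have t1 := mul_le_mul_of_nonneg_left hp ha
    have t2 := mul_le_mul_of_nonneg_left hq hb
    nlinarith [t1, t2]

/-- full dimensionality -/
lemma fullDim {P : Set E2} {L : ℝ} (hL : L ≠ 0)
    (h0 : ![0,0] ∈ P) (h1 : ![L,0] ∈ P) (h2 : ![0,L] ∈ P) :
    affineSpan ℝ P = ⊤ := by
  rw [eq_top_iff]
  intro x _
  have m0 := mem_affineSpan ℝ h0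
  have m1 := mem_affineSpan ℝ h1
  have m2 := mem_affineSpan ℝ h2
  have w1 := AffineSubspace.smul_vsub_vadd_mem (affineSpan ℝ P) (x 0 / L) m1 m0 m0
  have w2 := AffineSubspace.smul_vsub_vadd_mem (affineSpan ℝ P) (x 1 / L) m2 m0 w1
  have hx : (x 1 / L) • ((![0,L] : E2) -ᵥ (![0,0] : E2)) +ᵥ
      ((x 0 / L) • ((![L,0] : E2) -ᵥ (![0,0] : E2)) +ᵥ (![0,0] : E2)) = x := by
    funext i
    fin_cases i <;>
      · simp only [Fin.zero_eta, Fin.mk_one, vsub_eq_sub, vadd_eq_add, Pi.add_apply, Pi.smul_apply, Pi.sub_apply,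
          Matrix.cons_val_zero, Matrix.cons_val_one, Matrix.head_cons, smul_eq_mul]
        field_simp
        ring
  rwa [hx] at w2

lemma integral_affine (a b m c : ℝ) :
    ∫ t in a..b, (m * t + c) = m * ((b^2 - a^2)/2) + c * (b - a) := by
  rw [intervalIntegral.integral_add ((by fun_prop : Continuous fun t : ℝ => m * t).intervalIntegrable _ _)
    (continuous_const.intervalIntegrable _ _), intervalIntegral.integral_const_mul, integral_id,
    intervalIntegral.integral_const]
  simp only [smul_eq_mul]
  ring

set_option maxHeartbeats 2000000 in
/-- The hexagon region lemma. -/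
theorem region_main (L A C D B : ℝ)
    (hA : 0 ≤ A) (hAC : A < C) (hCL : C < L)
    (hB : 0 ≤ B) (hBD : B ≤ D) (hDL : D ≤ L)
    (hcross : (B - D) * (C - A) ≤ (D - L) * (L - C)) :
    volume (convexHull ℝ ({![0,0], ![L,0], ![L,B], ![C,D], ![A,L], ![0,L]} : Set E2))
      = ENNReal.ofReal ((2*A*L + (C-A)*(L+D) + (L-C)*(D+B))/2) := by
  have hCA0 : (0:ℝ) < C - A := by linarith
  have hLC0 : (0:ℝ) < L - C := by linarith
  have hL0 : (0:ℝ) < L := by linarith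
  obtain ⟨s2, hs2def⟩ : ∃ t, t = (D - L)/(C - A) := ⟨_, rfl⟩
  obtain ⟨s3, hs3def⟩ : ∃ t, t = (B - D)/(L - C) := ⟨_, rfl⟩
  obtain ⟨L2, hL2def⟩ : ∃ f : ℝ → ℝ, f = fun x => s2 * (x - A) + L := ⟨_, rfl⟩
  obtain ⟨L3, hL3def⟩ : ∃ f : ℝ → ℝ, f = fun x => s3 * (x - C) + D := ⟨_, rfl⟩
  have e2 : s2 * (C - A) = D - L := by rw [hs2def]; exact div_mul_cancel₀ _ hCA0.ne'
  have e3 : s3 * (L - C) = B - D := by rw [hs3def]; exact div_mul_cancel₀ _ hLC0.ne'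
  have hs2 : s2 ≤ 0 := hs2def ▸ div_nonpos_of_nonpos_of_nonneg (by linarith) hCA0.le
  have hs3 : s3 ≤ 0 := hs3def ▸ div_nonpos_of_nonpos_of_nonneg (by linarith) hLC0.le
  have hs32 : s3 ≤ s2 := by
    rw [hs3def, hs2def, div_le_div_iff₀ hLC0 hCA0]
    nlinarith [hcross]
  obtain ⟨F, hFdef⟩ : ∃ f : ℝ → ℝ, f = fun x => min L (min (L2 x) (L3 x)) := ⟨_, rfl⟩
  -- piecewise description
  have f9 : ∀ x, x ≤ A → F x = L := by
    intro x hx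
    have h2 : L ≤ L2 x := by
      simp only [hL2def]
      nlinarith [mul_nonneg (neg_nonneg.2 hs2) (sub_nonneg.2 hx)]
    have h3 : L ≤ L3 x := by
      simp only [hL3def]
      nlinarith [mul_le_mul_of_nonpos_left (by linarith : x - C ≤ A - C) hs3,
        mul_le_mul_of_nonpos_right hs32 (by linarith : A - C ≤ 0), e2]
    simp only [hFdef]
    rw [min_eq_left (le_min h2 h3)]
  have f7 : ∀ x, A ≤ x → x ≤ C → F x = L2 x := by
    intro x hx1 hx2
    have h1 : L2 x ≤ L := by
      simp only [hL2def]
      nlinarith [mul_nonpos_of_nonpos_of_nonneg hs2 (sub_nonneg.2 hx1)]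
    have h2 : L2 x ≤ L3 x := by
      simp only [hL2def, hL3def]
      nlinarith [mul_le_mul_of_nonpos_right hs32 (by linarith : x - C ≤ 0), e2]
    simp only [hFdef]
    rw [min_eq_left h2, min_eq_right h1]
  have f8 : ∀ x, C ≤ x → F x = L3 x := by
    intro x hx
    have h2 : L3 x ≤ L2 x := by
      simp only [hL2def, hL3def]
      nlinarith [mul_le_mul_of_nonneg_right hs32 (by linarith : 0 ≤ x - C), e2]
    have h1 : L3 x ≤ L := by
      simp only [hL3def]
      nlinarith [mul_nonpos_of_nonpos_of_nonneg hs3 (sub_nonneg.2 hx)]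
    simp only [hFdef]
    rw [min_eq_right h2, min_eq_right h1]
  have f10 : ∀ x, x ≤ L → 0 ≤ F x := by
    intro x hx
    simp only [hFdef]
    refine le_min hL0.le (le_min ?_ ?_)
    · simp only [hL2def]
      nlinarith [mul_le_mul_of_nonpos_left (by linarith : x - A ≤ L - A) hs2,
        mul_le_mul_of_nonneg_right hs32 (by linarith : 0 ≤ L - C), e2, e3]
    · simp only [hL3def]
      nlinarith [mul_le_mul_of_nonpos_left (by linarith : x - C ≤ L - C) hs3, e3]
  obtain ⟨R, hRdef⟩ : ∃ R : Set E2, R = {p | 0 ≤ p 0 ∧ p 0 ≤ L ∧ 0 ≤ p 1 ∧ p 1 ≤ F (p 0)} :=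
    ⟨_, rfl⟩
  have hFC : F C = D := by rw [f7 C hAC.le le_rfl]; simp only [hL2def]; linarith [e2]
  have hFL : F L = B := by rw [f8 L hCL.le]; simp only [hL3def]; linarith [e3]
  have hullR : convexHull ℝ ({![0,0], ![L,0], ![L,B], ![C,D], ![A,L], ![0,L]} : Set E2) = R := by
    apply Subset.antisymm
    · apply convexHull_min
      · rintro p (rfl|rfl|rfl|rfl|rfl|rfl) <;>
          simp only [hRdef, mem_setOf_eq, Matrix.cons_val_zero, Matrix.cons_val_one,
            Matrix.head_cons]
        · exact ⟨le_rfl, hL0.le, le_rfl, f10 0 hL0.le⟩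
        · exact ⟨hL0.le, le_rfl, le_rfl, f10 L le_rfl⟩
        · exact ⟨hL0.le, le_rfl, hB, by rw [hFL]⟩
        · exact ⟨by linarith, by linarith, by linarith, by rw [hFC]⟩
        · exact ⟨hA, by linarith, by linarith, by rw [f9 A le_rfl]⟩
        · exact ⟨le_rfl, hL0.le, by linarith, by rw [f9 0 hA]⟩
      · rw [hRdef]
        rintro p ⟨hp0, hp1, hp2, hp3⟩ q ⟨hq0, hq1, hq2, hq3⟩ a b ha hb hab
        simp only [hFdef, le_min_iff, hL2def, hL3def] at hp3 hq3
        obtain ⟨hpL, hp4, hp5⟩ := hp3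
        obtain ⟨hqL, hq4, hq5⟩ := hq3
        have hx : (a • p + b • q) 0 = a * p 0 + b * q 0 := by simp
        have hy : (a • p + b • q) 1 = a * p 1 + b * q 1 := by simp
        have haL : a * L + b * L = L := by linear_combination L * hab
        refine ⟨?_, ?_, ?_, ?_⟩
        · rw [hx]; exact add_nonneg (mul_nonneg ha hp0) (mul_nonneg hb hq0)
        · rw [hx]
          have t1 := mul_le_mul_of_nonneg_left hp1 ha
          have t2 := mul_le_mul_of_nonneg_left hq1 hb
          linarith
        · rw [hy]; exact add_nonneg (mul_nonneg ha hp2) (mul_nonneg hb hq2)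
        · rw [hy, hx, hFdef]
          simp only [le_min_iff, hL2def, hL3def]
          refine ⟨?_, ?_, ?_⟩
          · have t1 := mul_le_mul_of_nonneg_left hpL ha
            have t2 := mul_le_mul_of_nonneg_left hqL hb
            linarith
          · have id2 : a * (s2 * (p 0 - A) + L) + b * (s2 * (q 0 - A) + L)
                = s2 * ((a * p 0 + b * q 0) - A) + L := by linear_combination (L - s2 * A) * hab
            have t1 := mul_le_mul_of_nonneg_left hp4 ha
            have t2 := mul_le_mul_of_nonneg_left hq4 hb
            linarith
          · have id3 : a * (s3 * (p 0 - C) + D) + b * (s3 * (q 0 - C) + D)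
                = s3 * ((a * p 0 + b * q 0) - C) + D := by linear_combination (D - s3 * C) * hab
            have t1 := mul_le_mul_of_nonneg_left hp5 ha
            have t2 := mul_le_mul_of_nonneg_left hq5 hb
            linarith
    · rw [hRdef]
      intro p hp
      obtain ⟨hp0, hp1, hp2, hp3⟩ := hp
      have hCAne : C - A ≠ 0 := hCA0.ne'
      have hLCne : L - C ≠ 0 := hLC0.ne'
      obtain ⟨x, hxdef⟩ : ∃ t, t = p 0 := ⟨_, rfl⟩
      obtain ⟨y, hydef⟩ : ∃ t, t = p 1 := ⟨_, rfl⟩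
      rw [← hxdef] at hp0 hp1 hp3
      rw [← hydef] at hp2 hp3
      have m1 : (![0,0] : E2) ∈ convexHull ℝ ({![0,0], ![L,0], ![L,B], ![C,D], ![A,L], ![0,L]} : Set E2) :=
        subset_convexHull ℝ _ (by simp)
      have m2 : (![L,0] : E2) ∈ convexHull ℝ ({![0,0], ![L,0], ![L,B], ![C,D], ![A,L], ![0,L]} : Set E2) :=
        subset_convexHull ℝ _ (by simp)
      have m3 : (![L,B] : E2) ∈ convexHull ℝ ({![0,0], ![L,0], ![L,B], ![C,D], ![A,L], ![0,L]} : Set E2) :=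
        subset_convexHull ℝ _ (by simp)
      have m4 : (![C,D] : E2) ∈ convexHull ℝ ({![0,0], ![L,0], ![L,B], ![C,D], ![A,L], ![0,L]} : Set E2) :=
        subset_convexHull ℝ _ (by simp)
      have m5 : (![A,L] : E2) ∈ convexHull ℝ ({![0,0], ![L,0], ![L,B], ![C,D], ![A,L], ![0,L]} : Set E2) :=
        subset_convexHull ℝ _ (by simp)
      have m6 : (![0,L] : E2) ∈ convexHull ℝ ({![0,0], ![L,0], ![L,B], ![C,D], ![A,L], ![0,L]} : Set E2) :=
        subset_convexHull ℝ _ (by simp)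
      have hbot : (![x, 0] : E2) ∈ convexHull ℝ ({![0,0], ![L,0], ![L,B], ![C,D], ![A,L], ![0,L]} : Set E2) := by
        refine hull_seg m1 m2 (x / L) x 0 (div_nonneg hp0 hL0.le)
          ((div_le_one hL0).2 hp1) ?_ (by ring)
        rw [mul_zero, zero_add, div_mul_cancel₀ x hL0.ne']
      have htop : (![x, F x] : E2) ∈ convexHull ℝ ({![0,0], ![L,0], ![L,B], ![C,D], ![A,L], ![0,L]} : Set E2) := by
        rcases le_or_gt x A with hcase | hcase
        · rw [f9 x hcase]
          rcases eq_or_lt_of_le hA with hA0 | hA0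
          · have hx0 : x = 0 := le_antisymm (hA0 ▸ hcase) hp0
            rw [hx0]; exact m6
          · refine hull_seg m6 m5 (x / A) x L (div_nonneg hp0 hA0.le)
              ((div_le_one hA0).2 hcase) ?_ (by ring)
            rw [mul_zero, zero_add, div_mul_cancel₀ x hA0.ne']
        · rcases le_or_gt x C with hcase2 | hcase2
          · rw [f7 x hcase.le hcase2]
            refine hull_seg m5 m4 ((x - A)/(C - A)) x (L2 x)
              (div_nonneg (by linarith) hCA0.le) ((div_le_one hCA0).2 (by linarith)) ?_ ?_
            · field_simp
              ring
            · simp only [hL2def, hs2def]; field_simp; ring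
          · rw [f8 x hcase2.le]
            refine hull_seg m4 m3 ((x - C)/(L - C)) x (L3 x)
              (div_nonneg (by linarith) hLC0.le) ((div_le_one hLC0).2 (by linarith)) ?_ ?_
            · field_simp
              ring
            · simp only [hL3def, hs3def]; field_simp; ring
      have hpeq : p = ![x, y] := by
        funext i
        fin_cases i
        · simpa using hxdef.symm
        · simpa using hydef.symm
      rw [hpeq]
      have hF0 : 0 ≤ F x := f10 x hp1
      rcases eq_or_lt_of_le hF0 with hF0' | hF0'
      · have hy0 : y = 0 := le_antisymm (hF0' ▸ hp3) hp2
        rw [hy0]; exact hbot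
      · refine hull_seg hbot htop (y / F x) x y (div_nonneg hp2 hF0)
          ((div_le_one hF0').2 hp3) (by ring) ?_
        rw [mul_zero, zero_add, div_mul_cancel₀ y hF0'.ne']
  rw [hullR]
  have hL2cont : Continuous L2 := by rw [hL2def]; fun_prop
  have hL3cont : Continuous L3 := by rw [hL3def]; fun_prop
  have hFcont : Continuous F := by rw [hFdef]; exact continuous_const.min (hL2cont.min hL3cont)
  obtain ⟨A2, hA2def⟩ : ∃ s : Set (ℝ × ℝ), s = {q | 0 ≤ q.1 ∧ q.1 ≤ L ∧ 0 ≤ q.2 ∧ q.2 ≤ F q.1} :=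
    ⟨_, rfl⟩
  have hA2m : MeasurableSet A2 := by
    have h' : A2 = {q : ℝ × ℝ | 0 ≤ q.1} ∩ ({q | q.1 ≤ L} ∩ ({q | 0 ≤ q.2} ∩ {q | q.2 ≤ F q.1})) := by
      rw [hA2def]; rfl
    rw [h']
    exact (measurableSet_le measurable_const measurable_fst).inter
      ((measurableSet_le measurable_fst measurable_const).inter
        ((measurableSet_le measurable_const measurable_snd).inter
          (measurableSet_le measurable_snd (hFcont.measurable.comp measurable_fst))))
  have hpre : (MeasurableEquiv.finTwoArrow : E2 ≃ᵐ ℝ × ℝ) ⁻¹' A2 = R := by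
    ext p
    rw [hA2def, hRdef]
    simp [MeasurableEquiv.finTwoArrow, MeasurableEquiv.piFinTwo]
  have hvol : volume R = volume A2 := by
    rw [← hpre]
    exact (volume_preserving_finTwoArrow ℝ).measure_preimage hA2m.nullMeasurableSet
  rw [hvol]
  rw [Measure.volume_eq_prod, Measure.prod_apply hA2m]
  have hslice : ∀ xv : ℝ, volume (Prod.mk xv ⁻¹' A2)
      = (Icc (0:ℝ) L).indicator (fun t => ENNReal.ofReal (F t)) xv := by
    intro xv
    by_cases hxv : xv ∈ Icc (0:ℝ) L
    · have hset : Prod.mk xv ⁻¹' A2 = Icc 0 (F xv) := by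
        rw [hA2def]
        ext t
        simp only [mem_preimage, mem_setOf_eq, mem_Icc]
        constructor
        · rintro ⟨-, -, h1, h2⟩; exact ⟨h1, h2⟩
        · rintro ⟨h1, h2⟩; exact ⟨hxv.1, hxv.2, h1, h2⟩
      rw [hset, Real.volume_Icc, indicator_of_mem hxv, sub_zero]
    · have hset : Prod.mk xv ⁻¹' A2 = ∅ := by
        rw [hA2def]
        ext t
        simp only [mem_preimage, mem_setOf_eq, mem_empty_iff_false, iff_false]
        rintro ⟨h1, h2, -, -⟩
        exact hxv (mem_Icc.2 ⟨h1, h2⟩)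
      rw [hset, indicator_of_notMem hxv]
      simp
  rw [lintegral_congr hslice, lintegral_indicator measurableSet_Icc _]
  have hint : IntegrableOn F (Icc (0:ℝ) L) := hFcont.integrableOn_Icc
  have hnn : 0 ≤ᵐ[volume.restrict (Icc (0:ℝ) L)] F :=
    (ae_restrict_iff' measurableSet_Icc).2 (ae_of_all _ (fun t ht => f10 t ht.2))
  rw [← ofReal_integral_eq_lintegral_ofReal hint hnn]
  congr 1
  rw [integral_Icc_eq_integral_Ioc, ← intervalIntegral.integral_of_le hL0.le]
  rw [← intervalIntegral.integral_add_adjacent_intervals (hFcont.intervalIntegrable 0 A)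
      (hFcont.intervalIntegrable A L),
    ← intervalIntegral.integral_add_adjacent_intervals (hFcont.intervalIntegrable A C)
      (hFcont.intervalIntegrable C L)]
  have p1 : ∫ t in (0:ℝ)..A, F t = A * L := by
    have heq : EqOn F (fun _ => L) (uIcc (0:ℝ) A) := by
      intro t ht
      rw [uIcc_of_le hA] at ht
      exact f9 t ht.2
    rw [intervalIntegral.integral_congr heq, intervalIntegral.integral_const]
    simp [smul_eq_mul]
  have p2 : ∫ t in A..C, F t = s2 * ((C^2 - A^2)/2) + (L - s2*A) * (C - A) := by
    have heq : EqOn F (fun t => s2 * t + (L - s2*A)) (uIcc A C) := by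
      intro t ht
      rw [uIcc_of_le hAC.le] at ht
      rw [f7 t ht.1 ht.2, hL2def]
      ring
    rw [intervalIntegral.integral_congr heq, integral_affine]
  have p3 : ∫ t in C..L, F t = s3 * ((L^2 - C^2)/2) + (D - s3*C) * (L - C) := by
    have heq : EqOn F (fun t => s3 * t + (D - s3*C)) (uIcc C L) := by
      intro t ht
      rw [uIcc_of_le hCL.le] at ht
      rw [f8 t ht.1, hL3def]
      ring
    rw [intervalIntegral.integral_congr heq, integral_affine]
  rw [p1, p2, p3]
  linear_combination ((C - A)/2) * e2 + ((L - C)/2) * e3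


end Helpers

namespace Sq

lemma square_hull_eq {L : ℝ} (hL : 0 < L) :
    convexHull ℝ ({![0,0], ![L,0], ![L,L], ![0,L]} : Set Helpers.E2)
      = Icc (fun _ => 0) (fun _ => L) := by
  apply Subset.antisymm
  · apply convexHull_min
    · rintro p (rfl|rfl|rfl|rfl) <;>
        constructor <;>
        · intro i
          fin_cases i <;>
            simp [Matrix.cons_val_zero, Matrix.cons_val_one, Matrix.head_cons] <;> linarith
    · exact convex_Icc _ _
  · rintro p ⟨h1, h2⟩
    have hp : p = ![p 0, p 1] := by
      funext i; fin_cases i <;> rfl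
    rw [hp]
    exact Helpers.mem_sq hL (h1 0) (h2 0) (h1 1) (h2 1)

lemma square_volume {L : ℝ} (hL : 0 < L) :
    volume (convexHull ℝ ({![0,0], ![L,0], ![L,L], ![0,L]} : Set Helpers.E2))
      = ENNReal.ofReal (L * L) := by
  rw [square_hull_eq hL, Real.volume_Icc_pi, Fin.prod_univ_two]
  simp [← ENNReal.ofReal_mul hL.le]

end Sq

section Workhorse

open Helpers

set_option maxHeartbeats 1000000 in
lemma workhorse (ℓ a c d b k : ℕ) (hℓ : 0 < ℓ) (hk : ℓ ≤ k)
    (hac : a < c) (hcl : c < ℓ) (hbd : b ≤ d) (hdl : d ≤ ℓ)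
    (hcross : ((b:ℤ) - d) * ((c:ℤ) - a) ≤ ((d:ℤ) - ℓ) * ((ℓ:ℤ) - c))
    (harea : (ℓ:ℤ) * ((a:ℤ) + b + c + d) - (a:ℤ)*d - (c:ℤ)*b = (ℓ:ℤ)^2 + k)
    (hcd : (ℓ:ℤ) < (c:ℤ) + d) :
    ∃ P : Set (Fin 2 → ℝ), IsConvexLatticePolytope 2 P ∧ IsFullDim 2 P ∧
      convexHull ℝ {![(0 : ℝ), 0], ![(ℓ : ℝ), 0], ![0, (ℓ : ℝ)]} ⊂ P ∧
      P ⊆ convexHull ℝ {![(0 : ℝ), 0], ![(ℓ : ℝ), 0], ![(ℓ : ℝ), (ℓ : ℝ)], ![0, (ℓ : ℝ)]} ∧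
      volume P = ENNReal.ofReal (((ℓ : ℝ) ^ 2 + (k : ℝ)) / 2) := by
  classical
  set V : Finset (Fin 2 → ℤ) :=
    {![0,0], ![(ℓ:ℤ),0], ![(ℓ:ℤ),(b:ℤ)], ![(c:ℤ),(d:ℤ)], ![(a:ℤ),(ℓ:ℤ)], ![0,(ℓ:ℤ)]} with hV
  have him : intVec '' (V : Set (Fin 2 → ℤ))
      = ({![0,0], ![(ℓ:ℝ),0], ![(ℓ:ℝ),(b:ℝ)], ![(c:ℝ),(d:ℝ)], ![(a:ℝ),(ℓ:ℝ)], ![0,(ℓ:ℝ)]}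
        : Set E2) := by
    rw [hV]
    simp only [Finset.coe_insert, Finset.coe_singleton, Set.image_insert_eq, Set.image_singleton,
      intVec_pair, Int.cast_natCast, Int.cast_zero]
  refine ⟨convexHull ℝ (intVec '' (V : Set (Fin 2 → ℤ))), ⟨V, rfl⟩, ?_, ?_, ?_, ?_⟩
  · -- full dim
    rw [him]
    apply fullDim (L := (ℓ:ℝ)) (by positivity)
    · exact subset_convexHull ℝ _ (by simp)
    · exact subset_convexHull ℝ _ (by simp)
    · exact subset_convexHull ℝ _ (by simp)
  · -- strict inclusion of triangle
    rw [him]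
    constructor
    · apply convexHull_mono
      intro x hx
      rcases hx with rfl|rfl|rfl
      · simp
      · simp
      · simp
    · intro hsub
      have hw : (![(c:ℝ),(d:ℝ)] : E2) ∈
          convexHull ℝ ({![(0:ℝ),0], ![(ℓ:ℝ),0], ![0,(ℓ:ℝ)]} : Set E2) :=
        hsub (subset_convexHull ℝ _ (by simp))
      have := triangle_halfplane (L := (ℓ:ℝ)) (by positivity) hw
      simp only [mem_setOf_eq, Matrix.cons_val_zero, Matrix.cons_val_one, Matrix.head_cons]
        at this
      have hcd' : (ℓ:ℝ) < (c:ℝ) + d := by exact_mod_cast hcd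
      linarith
  · -- inside square
    rw [him]
    apply convexHull_min
    · have hl0 : (0:ℝ) < (ℓ:ℝ) := by positivity
      have hb : (b:ℝ) ≤ (ℓ:ℝ) := by exact_mod_cast le_trans hbd hdl
      have hc : (c:ℝ) ≤ (ℓ:ℝ) := by exact_mod_cast hcl.le
      have hd : (d:ℝ) ≤ (ℓ:ℝ) := by exact_mod_cast hdl
      have ha : (a:ℝ) ≤ (ℓ:ℝ) := by exact_mod_cast (lt_trans hac hcl).le
      rintro x (rfl|rfl|rfl|rfl|rfl|rfl)
      · exact mem_sq hl0 le_rfl hl0.le le_rfl hl0.le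
      · exact mem_sq hl0 hl0.le le_rfl le_rfl hl0.le
      · exact mem_sq hl0 hl0.le le_rfl (by positivity) hb
      · exact mem_sq hl0 (by positivity) hc (by positivity) hd
      · exact mem_sq hl0 (by positivity) ha hl0.le le_rfl
      · exact mem_sq hl0 le_rfl hl0.le hl0.le le_rfl
    · exact convex_convexHull ℝ _
  · -- volume
    rw [him]
    rw [region_main ((ℓ:ℝ)) ((a:ℝ)) ((c:ℝ)) ((d:ℝ)) ((b:ℝ)) (by positivity)
      (by exact_mod_cast hac) (by exact_mod_cast hcl) (by positivity)
      (by exact_mod_cast hbd) (by exact_mod_cast hdl) (by exact_mod_cast hcross)]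
    congr 1
    have h' : (ℓ:ℝ) * ((a:ℝ) + b + c + d) - (a:ℝ)*d - (c:ℝ)*b = (ℓ:ℝ)^2 + k := by
      exact_mod_cast harea
    linarith [h']
  
end Workhorse

section MainAssembly

open Helpers

set_option maxHeartbeats 1000000 in
lemma square_case (ℓ : ℕ) (hℓ : 0 < ℓ) :
    ∃ P : Set (Fin 2 → ℝ), IsConvexLatticePolytope 2 P ∧ IsFullDim 2 P ∧
      convexHull ℝ {![(0 : ℝ), 0], ![(ℓ : ℝ), 0], ![0, (ℓ : ℝ)]} ⊂ P ∧
      P ⊆ convexHull ℝ {![(0 : ℝ), 0], ![(ℓ : ℝ), 0], ![(ℓ : ℝ), (ℓ : ℝ)], ![0, (ℓ : ℝ)]} ∧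
      volume P = ENNReal.ofReal (((ℓ : ℝ) ^ 2 + ((ℓ^2 : ℕ) : ℝ)) / 2) := by
  classical
  have hl0 : (0:ℝ) < (ℓ:ℝ) := by positivity
  set V : Finset (Fin 2 → ℤ) := {![0,0], ![(ℓ:ℤ),0], ![(ℓ:ℤ),(ℓ:ℤ)], ![0,(ℓ:ℤ)]} with hV
  have him : intVec '' (V : Set (Fin 2 → ℤ))
      = ({![0,0], ![(ℓ:ℝ),0], ![(ℓ:ℝ),(ℓ:ℝ)], ![0,(ℓ:ℝ)]} : Set E2) := by
    rw [hV]
    simp only [Finset.coe_insert, Finset.coe_singleton, Set.image_insert_eq, Set.image_singleton,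
      intVec_pair, Int.cast_natCast, Int.cast_zero]
  refine ⟨convexHull ℝ (intVec '' (V : Set (Fin 2 → ℤ))), ⟨V, rfl⟩, ?_, ?_, ?_, ?_⟩
  · rw [him]
    apply fullDim (L := (ℓ:ℝ)) hl0.ne'
    · exact subset_convexHull ℝ _ (by simp)
    · exact subset_convexHull ℝ _ (by simp)
    · exact subset_convexHull ℝ _ (by simp)
  · rw [him]
    constructor
    · apply convexHull_mono
      intro x hx
      rcases hx with rfl|rfl|rfl
      · simp
      · simp
      · simp
    · intro hsub
      have hw : (![(ℓ:ℝ),(ℓ:ℝ)] : E2) ∈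
          convexHull ℝ ({![(0:ℝ),0], ![(ℓ:ℝ),0], ![0,(ℓ:ℝ)]} : Set E2) :=
        hsub (subset_convexHull ℝ _ (by simp))
      have := triangle_halfplane (L := (ℓ:ℝ)) hl0.le hw
      simp only [mem_setOf_eq, Matrix.cons_val_zero, Matrix.cons_val_one, Matrix.head_cons]
        at this
      linarith
  · rw [him]
  · rw [him, Sq.square_volume hl0]
    congr 1
    push_cast
    ring

end MainAssembly

set_option maxHeartbeats 1000000 in
theorem exists_polygon_between_triangle_and_square (ℓ : ℕ) (hℓ : 0 < ℓ)
    (k : ℕ) (hk₁ : ℓ ≤ k) (hk₂ : k ≤ ℓ ^ 2) :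
    ∃ P : Set (Fin 2 → ℝ), IsConvexLatticePolytope 2 P ∧ IsFullDim 2 P ∧
      convexHull ℝ {![(0 : ℝ), 0], ![(ℓ : ℝ), 0], ![0, (ℓ : ℝ)]} ⊂ P ∧
      P ⊆ convexHull ℝ {![(0 : ℝ), 0], ![(ℓ : ℝ), 0], ![(ℓ : ℝ), (ℓ : ℝ)], ![0, (ℓ : ℝ)]} ∧
      volume P = ENNReal.ofReal (((ℓ : ℝ) ^ 2 + (k : ℝ)) / 2) := by
  by_cases hsq : k = ℓ ^ 2
  · subst hsq
    exact square_case ℓ hℓ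
  have hklt : k < ℓ ^ 2 := lt_of_le_of_ne hk₂ hsq
  rw [pow_two] at hklt
  have hl2 : 2 ≤ ℓ := by
    rcases Nat.lt_or_ge ℓ 2 with h | h
    · exfalso
      have hone : ℓ = 1 := by omega
      rw [hone] at hklt hk₁
      omega
    · exact h
  obtain ⟨q, hqdef⟩ : ∃ t, t = k / ℓ := ⟨_, rfl⟩
  obtain ⟨r, hrdef⟩ : ∃ t, t = k % ℓ := ⟨_, rfl⟩
  have hqr : ℓ * q + r = k := by rw [hqdef, hrdef]; exact Nat.div_add_mod k ℓ
  have hrl : r < ℓ := by rw [hrdef]; exact Nat.mod_lt _ hℓ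
  have hq1 : 1 ≤ q := by rw [hqdef]; exact (Nat.one_le_div_iff hℓ).2 hk₁
  have hqlt : q < ℓ := by rw [hqdef]; exact Nat.div_lt_of_lt_mul hklt
  have hkZ : (ℓ:ℤ) * q + r = (k:ℤ) := by exact_mod_cast hqr
  by_cases hc1 : q = ℓ - 1
  · -- case 1 : params (0, ℓ-1, ℓ, r)
    have e1 : ((ℓ - 1 : ℕ) : ℤ) = (ℓ:ℤ) - 1 := by omega
    have hqZ : (q:ℤ) = (ℓ:ℤ) - 1 := by omega
    apply workhorse ℓ 0 (ℓ-1) ℓ r k hℓ hk₁ (by omega) (by omega) hrl.le le_rfl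
    · rw [e1]
      push_cast
      nlinarith [mul_nonneg (show (0:ℤ) ≤ (ℓ:ℤ) - r by omega)
        (show (0:ℤ) ≤ (ℓ:ℤ) - 1 by omega)]
    · rw [e1]
      push_cast
      linear_combination hkZ - (ℓ:ℤ) * hqZ
    · rw [e1]
      omega
  by_cases hc2 : q = ℓ - 2 ∧ r = ℓ - 1
  · -- case 2 : params (1, ℓ-1, ℓ-1, ℓ-2)
    obtain ⟨hc2q, hc2r⟩ := hc2
    have hl3 : 3 ≤ ℓ := by omega
    have e1 : ((ℓ - 1 : ℕ) : ℤ) = (ℓ:ℤ) - 1 := by omega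
    have e2 : ((ℓ - 2 : ℕ) : ℤ) = (ℓ:ℤ) - 2 := by omega
    have hkz : (k:ℤ) = (ℓ:ℤ) * ((ℓ:ℤ) - 2) + ((ℓ:ℤ) - 1) := by
      have hqZ : (q:ℤ) = (ℓ:ℤ) - 2 := by omega
      have hrZ : (r:ℤ) = (ℓ:ℤ) - 1 := by omega
      linear_combination -hkZ + (ℓ:ℤ) * hqZ + hrZ
    apply workhorse ℓ 1 (ℓ-1) (ℓ-1) (ℓ-2) k hℓ hk₁ (by omega) (by omega) (by omega) (by omega)
    · rw [e1, e2]
      push_cast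
      nlinarith [show (3:ℤ) ≤ (ℓ:ℤ) by exact_mod_cast hl3]
    · rw [e1, e2]
      push_cast
      linarith [hkz]
    · rw [e1]
      omega
  by_cases hc3 : 1 ≤ r ∧ q + r ≤ ℓ
  · -- case 3 : params (0, ℓ-r, q+r, 1)
    obtain ⟨hc3r, hc3s⟩ := hc3
    have e1 : ((ℓ - r : ℕ) : ℤ) = (ℓ:ℤ) - r := by omega
    apply workhorse ℓ 0 (ℓ-r) (q+r) 1 k hℓ hk₁ (by omega) (by omega) (by omega) (by omega)
    · rw [e1]
      push_cast
      nlinarith [mul_le_mul_of_nonneg_right (show (1:ℤ) ≤ (q:ℤ) by exact_mod_cast hq1)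
        (show (0:ℤ) ≤ (ℓ:ℤ) by positivity)]
    · rw [e1]
      push_cast
      linear_combination hkZ
    · rw [e1]
      push_cast
      have : (1:ℤ) ≤ (q:ℤ) := by exact_mod_cast hq1
      linarith
  by_cases hc4 : r = 0
  · -- case 4 : params (0, ℓ-1, q+1, 0)
    have e1 : ((ℓ - 1 : ℕ) : ℤ) = (ℓ:ℤ) - 1 := by omega
    have hrZ : (r:ℤ) = 0 := by omega
    apply workhorse ℓ 0 (ℓ-1) (q+1) 0 k hℓ hk₁ (by omega) (by omega) (by omega) (by omega)
    · rw [e1]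
      push_cast
      nlinarith [mul_le_mul_of_nonneg_right (show (1:ℤ) ≤ (q:ℤ) + 1 by omega)
        (show (0:ℤ) ≤ (ℓ:ℤ) - 1 by omega)]
    · rw [e1]
      push_cast
      linear_combination hkZ - hrZ
    · rw [e1]
      omega
  · -- case 5
    have hzone : ℓ + 1 ≤ q + r := by omega
    have hq2 : q ≤ ℓ - 2 := by omega
    have hw1 : 1 ≤ ℓ - q - 1 := by omega
    obtain ⟨w, hwdef⟩ : ∃ t, t = ℓ - q - 1 := ⟨_, rfl⟩
    obtain ⟨a, hadef⟩ : ∃ t, t = r / w := ⟨_, rfl⟩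
    obtain ⟨b, hbdef⟩ : ∃ t, t = r % w := ⟨_, rfl⟩
    have hw1' : 1 ≤ w := by omega
    have hdecomp : w * a + b = r := by rw [hadef, hbdef]; exact Nat.div_add_mod r w
    have hblt : b < w := by rw [hbdef]; exact Nat.mod_lt _ (by omega)
    have hra : w + 2 ≤ r := by omega
    have ha1 : 1 ≤ a := by
      rw [hadef]
      exact (Nat.one_le_div_iff (by omega)).2 (by omega)
    obtain ⟨m, hm⟩ : ∃ m, m = w * a := ⟨_, rfl⟩
    rw [← hm] at hdecomp
    have hwa : w ≤ m := by
      rw [hm]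
      calc w = w * 1 := (mul_one w).symm
      _ ≤ w * a := Nat.mul_le_mul_left w ha1
    have hbq : b ≤ q := by omega
    have haL : a ≤ ℓ - 2 := by
      by_cases hwone : w = 1
      · have hma : m = a := by rw [hm, hwone, one_mul]
        omega
      · have h2a : 2 * a ≤ w * a := Nat.mul_le_mul_right a (by omega : 2 ≤ w)
        rw [← hm] at h2a
        omega
    have e1 : ((ℓ - 1 : ℕ) : ℤ) = (ℓ:ℤ) - 1 := by omega
    -- integer versions
    have hmZ : (m:ℤ) = (w:ℤ) * a := by exact_mod_cast hm
    have hdZ : (m:ℤ) + b = (r:ℤ) := by exact_mod_cast hdecomp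
    have hwZ : (w:ℤ) = (ℓ:ℤ) - q - 1 := by omega
    apply workhorse ℓ a (ℓ-1) (q+1) b k hℓ hk₁ (by omega) (by omega) (by omega) (by omega)
    · rw [e1]
      push_cast
      -- goal: ((b:ℤ) - (q+1)) * ((ℓ:ℤ) - 1 - a) ≤ ((q:ℤ)+1-ℓ) * ((ℓ:ℤ) - ((ℓ:ℤ)-1))
      have hkey : (b:ℤ) + (m - w) ≤ (q:ℤ) := by omega
      have hgoal : ((ℓ:ℤ) - q - 1) ≤ ((q:ℤ) + 1 - b) * ((ℓ:ℤ) - 1 - a) := by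
        by_cases hone : a = 1
        · have h1 : (1:ℤ) ≤ (q:ℤ) + 1 - b := by omega
          have h2 : ((ℓ:ℤ) - q - 1) ≤ (ℓ:ℤ) - 1 - a := by
            have : (a:ℤ) = 1 := by exact_mod_cast hone
            omega
          have := mul_le_mul h1 h2 (by omega) (by omega)
          linarith
        · have ha2 : 2 ≤ a := by omega
          have h2m : w * 2 ≤ m := by
            rw [hm]; exact Nat.mul_le_mul_left w ha2
          have h2mZ : (w:ℤ) * 2 ≤ (m:ℤ) := by exact_mod_cast h2m
          have h1 : ((ℓ:ℤ) - q - 1) + 1 ≤ (q:ℤ) + 1 - b := by omega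
          have h2 : (1:ℤ) ≤ (ℓ:ℤ) - 1 - a := by omega
          have := mul_le_mul h1 h2 (by omega) (by omega)
          nlinarith [this]
      nlinarith [hgoal]
    · rw [e1]
      push_cast
      linear_combination hkZ + hdZ - (a:ℤ) * hwZ - hmZ
    · rw [e1]
      omega

end
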